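/- Let D = E + Zγ₃ + ⋯ + Zγ_l where E = Z(α₁−α₂) + Z(α₂−α₃). Then the index of D + Zα₂ in the group D + Zα₂ relative to D, i.e. |D + Zα₂ : D|, equals lcm(3, 4, …, l). -/

import Mathlib

/-- The standard basis vector `α_i` (0-indexed) of `L = ℤ^l`. -/
def al (l : ℕ) (i : ℕ) : Fin l → ℤ := fun j => if (j : ℕ) = i then 1 else 0

/-- `γ_r = α₁ + ⋯ + α_r - r·α_{r+1}` for `r ≤ l-1`, and `γ_l = α₁ + ⋯ + α_l`. -/
def ga (l r : ℕ) : Fin l → ℤ :=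
  fun j => if (j : ℕ) < r then 1 else if (j : ℕ) = r then -(r : ℤ) else 0

/-- `D = E + ℤγ₃ + ⋯ + ℤγ_l` where `E = ℤ(α₁-α₂) + ℤ(α₂-α₃)`. -/
def D (l : ℕ) : Submodule ℤ (Fin l → ℤ) :=
  Submodule.span ℤ ({al l 0 - al l 1, al l 1 - al l 2} ∪
    {x | ∃ r : ℕ, 3 ≤ r ∧ r ≤ l ∧ x = ga l r})

/-- Sum of the first `r` coordinates. -/
def F (l r : ℕ) (x : Fin l → ℤ) : ℤ :=
  ∑ j ∈ Finset.range r, (if h : j < l then x ⟨j, h⟩ else 0)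

lemma F_add (l r : ℕ) (x y : Fin l → ℤ) : F l r (x + y) = F l r x + F l r y := by
  unfold F
  rw [← Finset.sum_add_distrib]
  refine Finset.sum_congr rfl fun j _ => ?_
  by_cases h : j < l <;> simp [h]

lemma F_smul (l r : ℕ) (c : ℤ) (x : Fin l → ℤ) : F l r (c • x) = c * F l r x := by
  unfold F
  rw [Finset.mul_sum]
  refine Finset.sum_congr rfl fun j _ => ?_
  by_cases h : j < l <;> simp [h]

lemma F_sub (l r : ℕ) (x y : Fin l → ℤ) : F l r (x - y) = F l r x - F l r y := by
  unfold F
  rw [← Finset.sum_sub_distrib]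
  refine Finset.sum_congr rfl fun j _ => ?_
  by_cases h : j < l <;> simp [h]

lemma F_al (l r i : ℕ) (hrl : r ≤ l) : F l r (al l i) = if i < r then 1 else 0 := by
  unfold F
  have : ∀ j ∈ Finset.range r, (if h : j < l then al l i ⟨j, h⟩ else 0)
      = if j = i then (1 : ℤ) else 0 := by
    intro j hj
    rw [dif_pos (lt_of_lt_of_le (Finset.mem_range.mp hj) hrl)]
    rfl
  rw [Finset.sum_congr rfl this, Finset.sum_ite_eq' (Finset.range r) i (fun _ => (1:ℤ))]
  simp

lemma F_ga_le (l r s : ℕ) (hrl : r ≤ l) (hrs : r ≤ s) : F l r (ga l s) = r := by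
  unfold F
  have : ∀ j ∈ Finset.range r, (if h : j < l then ga l s ⟨j, h⟩ else 0) = (1 : ℤ) := by
    intro j hj
    have hj' := Finset.mem_range.mp hj
    rw [dif_pos (lt_of_lt_of_le hj' hrl)]
    simp only [ga]
    rw [if_pos (lt_of_lt_of_le hj' hrs)]
  rw [Finset.sum_congr rfl this]
  simp

lemma F_ga_gt (l r s : ℕ) (hrl : r ≤ l) (hrs : s < r) : F l r (ga l s) = 0 := by
  unfold F
  have : ∀ j ∈ Finset.range r, (if h : j < l then ga l s ⟨j, h⟩ else 0)
      = (if j ∈ Finset.range s then (1:ℤ) else 0) + (if j = s then -(s:ℤ) else 0) := by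
    intro j hj
    have hj' := Finset.mem_range.mp hj
    rw [dif_pos (lt_of_lt_of_le hj' hrl)]
    simp only [ga, Finset.mem_range]
    split_ifs <;> omega
  rw [Finset.sum_congr rfl this, Finset.sum_add_distrib,
    Finset.sum_ite_mem, Finset.sum_ite_eq' (Finset.range r) s (fun _ => -(s:ℤ))]
  have h1 : Finset.range r ∩ Finset.range s = Finset.range s := by
    ext j; simp [Finset.mem_range]; omega
  rw [h1, if_pos (Finset.mem_range.mpr hrs)]
  simp

lemma F_dvd_of_memD (l r : ℕ) (hr3 : 3 ≤ r) (hrl : r ≤ l) {x : Fin l → ℤ} (hx : x ∈ D l) :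
    (r : ℤ) ∣ F l r x := by
  induction hx using Submodule.span_induction with
  | mem x hx =>
    rcases hx with hx | ⟨s, hs3, hsl, rfl⟩
    · rcases hx with rfl | rfl
      · rw [F_sub, F_al l r 0 hrl, F_al l r 1 hrl, if_pos (by omega), if_pos (by omega)]
        simp
      · rw [F_sub, F_al l r 1 hrl, F_al l r 2 hrl, if_pos (by omega), if_pos (by omega)]
        simp
    · rcases le_or_gt r s with h | h
      · rw [F_ga_le l r s hrl h]
      · rw [F_ga_gt l r s hrl h]; exact dvd_zero _
  | zero => simp [F]
  | add x y _ _ hx hy => rw [F_add]; exact dvd_add hx hy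
  | smul c x _ hx => rw [F_smul]; exact Dvd.dvd.mul_left hx c


def sg (l r : ℕ) : Fin l → ℤ := fun j => if (j : ℕ) < r then 1 else 0

lemma sg_eq_ga (l : ℕ) : sg l l = ga l l := by
  funext j
  simp [sg, ga, j.isLt]

lemma ga_mem (l r : ℕ) (h3 : 3 ≤ r) (hrl : r ≤ l) : ga l r ∈ D l :=
  Submodule.subset_span (Or.inr ⟨r, h3, hrl, rfl⟩)

lemma e01_mem (l : ℕ) : al l 0 - al l 1 ∈ D l :=
  Submodule.subset_span (Or.inl (Set.mem_insert _ _))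

lemma e12_mem (l : ℕ) : al l 1 - al l 2 ∈ D l :=
  Submodule.subset_span (Or.inl (Set.mem_insert_iff.mpr (Or.inr rfl)))

lemma key1 (l : ℕ) (hl : 4 ≤ l) : (((Finset.Icc 3 l).lcm id : ℕ) : ℤ) • al l 1 ∈ D l := by
  set N := (Finset.Icc 3 l).lcm id with hN
  have hdvd : ∀ r, 3 ≤ r → r ≤ l → r ∣ N := fun r h3 hrl =>
    Finset.dvd_lcm (Finset.mem_Icc.mpr ⟨h3, hrl⟩)
  obtain ⟨c3, hc3⟩ := hdvd 3 le_rfl (by omega)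
  have main : ∀ r, 3 ≤ r → r ≤ l → ∀ k : ℕ, N = r * k →
      (c3 : ℤ) • sg l 3 - (k : ℤ) • sg l r ∈ D l := by
    intro r h3
    induction r, h3 using Nat.le_induction with
    | base =>
      intro _ k hk
      have : k = c3 := by omega
      subst this
      simp
    | succ r hr ih =>
      intro hrl k hk
      have h1 : r * (r + 1) ∣ N := Nat.Coprime.mul_dvd_of_dvd_of_dvd
        (by simp) (hdvd r hr (by omega)) (hdvd (r + 1) (by omega) hrl)
      obtain ⟨m, hm⟩ := h1
      have hk' : k = r * m := by
        have h2 : (r + 1) * k = (r + 1) * (r * m) := by rw [← hk, hm]; ring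
        exact Nat.eq_of_mul_eq_mul_left (by omega) h2
      subst hk'
      have hprev := ih (by omega) ((r + 1) * m) (by rw [hm]; ring)
      have hstep : (((r + 1) * m : ℕ) : ℤ) • sg l r - ((r * m : ℕ) : ℤ) • sg l (r + 1)
          = (m : ℤ) • ga l r := by
        funext j
        simp only [sg, ga, Pi.sub_apply, Pi.smul_apply, smul_eq_mul]
        split_ifs <;> first | (push_cast; ring1) | (exfalso; omega)
      have heq : (c3 : ℤ) • sg l 3 - ((r * m : ℕ) : ℤ) • sg l (r + 1)
          = ((c3 : ℤ) • sg l 3 - (((r + 1) * m : ℕ) : ℤ) • sg l r) + (m : ℤ) • ga l r := by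
        rw [← hstep]; abel
      rw [heq]
      exact Submodule.add_mem _ hprev (Submodule.smul_mem _ _ (ga_mem l r hr (by omega)))
  obtain ⟨kl, hkl⟩ := hdvd l (by omega) le_rfl
  have h1 := main l (by omega) le_rfl kl hkl
  have h2 : (kl : ℤ) • sg l l ∈ D l := by
    rw [sg_eq_ga]
    exact Submodule.smul_mem _ _ (ga_mem l l (by omega) le_rfl)
  have h3 : (c3 : ℤ) • sg l 3 ∈ D l := by
    have h4 := Submodule.add_mem _ h1 h2
    simpa using h4
  have heq : ((N : ℕ) : ℤ) • al l 1
      = (c3 : ℤ) • sg l 3 - (c3 : ℤ) • (al l 0 - al l 1) + (c3 : ℤ) • (al l 1 - al l 2) := by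
    funext j
    have hc3' : ((N : ℕ) : ℤ) = 3 * (c3 : ℤ) := by exact_mod_cast hc3
    simp only [sg, al, Pi.add_apply, Pi.sub_apply, Pi.smul_apply, smul_eq_mul, hc3']
    split_ifs <;> omega
  rw [heq]
  exact Submodule.add_mem _
    (Submodule.sub_mem _ h3 (Submodule.smul_mem _ _ (e01_mem l)))
    (Submodule.smul_mem _ _ (e12_mem l))

lemma key2 (l : ℕ) (hl : 4 ≤ l) (m : ℤ) (hm : m • al l 1 ∈ D l) :
    (((Finset.Icc 3 l).lcm id : ℕ) : ℤ) ∣ m := by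
  have hr : ∀ r ∈ Finset.Icc 3 l, id r ∣ m.natAbs := by
    intro r hrmem
    obtain ⟨h3, hrl⟩ := Finset.mem_Icc.mp hrmem
    have hd := F_dvd_of_memD l r h3 hrl hm
    rw [F_smul, F_al l r 1 hrl, if_pos (by omega), mul_one] at hd
    have : (r : ℤ) ∣ (m.natAbs : ℤ) := Int.dvd_natAbs.mpr hd
    exact_mod_cast this
  have hlcm := Finset.lcm_dvd hr
  exact Int.dvd_natAbs.mp (Int.natCast_dvd_natCast.mpr hlcm)

theorem stmt7 (l : ℕ) (hl : 4 ≤ l) :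
    AddSubgroup.relIndex (D l).toAddSubgroup
      ((D l) ⊔ Submodule.span ℤ {al l 1}).toAddSubgroup
      = (Finset.Icc 3 l).lcm id := by
  classical
  set N := (Finset.Icc 3 l).lcm id with hN
  set K := ((D l) ⊔ Submodule.span ℤ {al l 1}).toAddSubgroup with hK
  have he1K : al l 1 ∈ K := by
    rw [hK, Submodule.mem_toAddSubgroup]
    exact Submodule.mem_sup_right (Submodule.mem_span_singleton_self _)
  set H' := (D l).toAddSubgroup.addSubgroupOf K with hH'
  set e1 : ↥K := ⟨al l 1, he1K⟩ with he1
  set φ : ℤ →+ ↥K ⧸ H' := (QuotientAddGroup.mk' H').comp ((zmultiplesHom ↥K) e1) with hφdef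
  have hφ : ∀ m : ℤ, φ m = QuotientAddGroup.mk (m • e1) := fun m => rfl
  have hsurj : Function.Surjective φ := by
    intro q
    induction q using QuotientAddGroup.induction_on with
    | H x =>
      obtain ⟨y, hy, z, hz, hyz⟩ :=
        Submodule.mem_sup.mp ((Submodule.mem_toAddSubgroup _).mp x.2)
      obtain ⟨m, rfl⟩ := Submodule.mem_span_singleton.mp hz
      refine ⟨m, ?_⟩
      rw [hφ]
      refine QuotientAddGroup.eq.mpr ?_
      rw [AddSubgroup.mem_addSubgroupOf]
      have hval : ((-(m • e1) + x : ↥K) : Fin l → ℤ) = y := by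
        have hx : (x : Fin l → ℤ) = y + m • al l 1 := hyz.symm
        push_cast [he1]
        rw [hx]
        abel
      rw [Submodule.mem_toAddSubgroup, hval]
      exact hy
  have hker : φ.ker = AddSubgroup.zmultiples ((N : ℕ) : ℤ) := by
    ext m
    rw [AddMonoidHom.mem_ker, hφ, QuotientAddGroup.eq_zero_iff, hH',
      AddSubgroup.mem_addSubgroupOf]
    have hval : ((m • e1 : ↥K) : Fin l → ℤ) = m • al l 1 := by push_cast [he1]; rfl
    rw [Submodule.mem_toAddSubgroup, hval]
    constructor
    · intro h
      obtain ⟨k, hk⟩ := key2 l hl m h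
      exact AddSubgroup.mem_zmultiples_iff.mpr ⟨k, by rw [smul_eq_mul, mul_comm]; exact hk.symm⟩
    · intro h
      obtain ⟨k, hk⟩ := AddSubgroup.mem_zmultiples_iff.mp h
      rw [← hk, smul_eq_mul, mul_smul]
      exact Submodule.smul_mem _ _ (key1 l hl)
  have hcard : Nat.card (↥K ⧸ H') = N := by
    have e := ((QuotientAddGroup.quotientAddEquivOfEq hker).symm.trans
      (QuotientAddGroup.quotientKerEquivOfSurjective φ hsurj))
    have h1 : Nat.card (↥K ⧸ H') = Nat.card (ℤ ⧸ AddSubgroup.zmultiples ((N : ℕ) : ℤ)) :=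
      (Nat.card_congr e.toEquiv).symm
    have h2 : Nat.card (ℤ ⧸ AddSubgroup.zmultiples ((N : ℕ) : ℤ)) = Nat.card (ZMod N) :=
      Nat.card_congr (Int.quotientZMultiplesNatEquivZMod N).toEquiv
    rw [h1, h2, Nat.card_zmod]
  show H'.index = N
  rw [AddSubgroup.index_eq_card, hcard]
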